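/- For all parameters α > 0, ζ > 0, δ > 0 and γ ∈ ℝ, the fourth cumulant of the symmetric K-distribution, defined as κ₄ = μ̃₄ - 3 μ̃₂² where μ̃₂ and μ̃₄ are the second and fourth central moments, equals κ₄ = [α(α+1)(α+2)(α+3)ζ(ζ+1)(ζ+2)(ζ+3) - 3 (α(α+1)ζ(ζ+1))²] / δ⁴. -/

import Mathlib

open Real MeasureTheory

/-- Density of the symmetric K-distribution (SKD): the continuous mixture of a
reflected Gamma parental density over a Gamma prior. -/
noncomputable def skdDensity (α ζ δ γ : ℝ) (x : ℝ) : ℝ :=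
  ∫ β in Set.Ioi (0 : ℝ),
    (|x - γ| ^ (α - 1) / (2 * β ^ α * Real.Gamma α)) * Real.exp (-|x - γ| / β) *
      ((δ ^ ζ * β ^ (ζ - 1) / Real.Gamma ζ) * Real.exp (-δ * β))

open Set in
lemma my_integrable_comp_abs {f : ℝ → ℝ} (hf : IntegrableOn f (Set.Ioi 0)) :
    Integrable (fun x => f |x|) := by
  have h1 : IntegrableOn (fun x => f |x|) (Set.Ioi 0) :=
    hf.congr_fun (fun x hx => by rw [abs_of_pos hx]) measurableSet_Ioi
  have h2 : IntegrableOn (fun x ↦ f |x|) (Set.Iic 0) := by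
    rw [← Measure.map_neg_eq_self (volume : Measure ℝ)]
    have m : MeasurableEmbedding fun x : ℝ => -x := (Homeomorph.neg ℝ).measurableEmbedding
    rw [m.integrableOn_map_iff]
    simp_rw [Function.comp_def, abs_neg, neg_preimage, neg_Iic, neg_zero]
    exact Iff.mpr integrableOn_Ici_iff_integrableOn_Ioi h1
  rw [← integrableOn_univ, ← Set.Iic_union_Ioi (a := (0:ℝ))]
  exact h2.union h1

lemma skd_inner (α ζ δ γ : ℝ) (hα : 0 < α) (hζ : 0 < ζ) (hδ : 0 < δ) (k : ℕ) (hk : Even k)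
    {β : ℝ} (hβ : 0 < β) :
    Integrable (fun x : ℝ => (x - γ) ^ k *
        ((|x - γ| ^ (α - 1) / (2 * β ^ α * Real.Gamma α)) * Real.exp (-|x - γ| / β) *
          ((δ ^ ζ * β ^ (ζ - 1) / Real.Gamma ζ) * Real.exp (-δ * β)))) ∧
    (∫ x : ℝ, (x - γ) ^ k *
        ((|x - γ| ^ (α - 1) / (2 * β ^ α * Real.Gamma α)) * Real.exp (-|x - γ| / β) *
          ((δ ^ ζ * β ^ (ζ - 1) / Real.Gamma ζ) * Real.exp (-δ * β))))
      = (δ ^ ζ * Real.Gamma (α + k) / (Real.Gamma α * Real.Gamma ζ)) *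
          (β ^ (ζ + (k : ℝ) - 1) * Real.exp (-δ * β)) := by
  set D : ℝ := δ ^ ζ * β ^ (ζ - 1) * Real.exp (-δ * β) /
      (2 * β ^ α * Real.Gamma α * Real.Gamma ζ) with hD
  have hfun : ∀ x : ℝ, (x - γ) ^ k *
        ((|x - γ| ^ (α - 1) / (2 * β ^ α * Real.Gamma α)) * Real.exp (-|x - γ| / β) *
          ((δ ^ ζ * β ^ (ζ - 1) / Real.Gamma ζ) * Real.exp (-δ * β)))
      = D * ((x - γ) ^ k * (|x - γ| ^ (α - 1) * Real.exp (-|x - γ| / β))) := by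
    intro x; rw [hD]; ring
  have hg : IntegrableOn (fun u : ℝ => u ^ k * (u ^ (α - 1) * Real.exp (-u / β)))
      (Set.Ioi 0) := by
    have h := integrableOn_rpow_mul_exp_neg_mul_rpow (s := α + (k : ℝ) - 1) (p := 1)
      (b := 1 / β) (by have : (0:ℝ) ≤ (k:ℝ) := Nat.cast_nonneg k; linarith) zero_lt_one
      (by positivity)
    refine h.congr_fun (fun u hu => ?_) measurableSet_Ioi
    have h1 : u ^ (α + (k : ℝ) - 1) = u ^ k * u ^ (α - 1) := by
      rw [← Real.rpow_natCast u k, ← Real.rpow_add hu]; congr 1; ring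
    beta_reduce
    rw [Real.rpow_one, h1]
    rw [show -(1 / β) * u = -u / β by ring]
    ring
  have habs : (fun t : ℝ => t ^ k * (|t| ^ (α - 1) * Real.exp (-|t| / β)))
      = fun t : ℝ => (fun u : ℝ => u ^ k * (u ^ (α - 1) * Real.exp (-u / β))) |t| := by
    funext t; simp only; rw [hk.pow_abs]
  have hIφ : Integrable (fun t : ℝ => t ^ k * (|t| ^ (α - 1) * Real.exp (-|t| / β))) := by
    rw [habs]; exact my_integrable_comp_abs hg
  have hI : Integrable (fun x : ℝ => (x - γ) ^ k *
        ((|x - γ| ^ (α - 1) / (2 * β ^ α * Real.Gamma α)) * Real.exp (-|x - γ| / β) *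
          ((δ ^ ζ * β ^ (ζ - 1) / Real.Gamma ζ) * Real.exp (-δ * β)))) := by
    have h := ((hIφ.comp_sub_right γ).const_mul D)
    exact h.congr (Filter.Eventually.of_forall fun x => (hfun x).symm)
  refine ⟨hI, ?_⟩
  calc ∫ x : ℝ, (x - γ) ^ k *
        ((|x - γ| ^ (α - 1) / (2 * β ^ α * Real.Gamma α)) * Real.exp (-|x - γ| / β) *
          ((δ ^ ζ * β ^ (ζ - 1) / Real.Gamma ζ) * Real.exp (-δ * β)))
      = ∫ x : ℝ, D * ((x - γ) ^ k * (|x - γ| ^ (α - 1) * Real.exp (-|x - γ| / β))) := by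
        exact congrArg _ (funext hfun)
    _ = D * ∫ x : ℝ, (x - γ) ^ k * (|x - γ| ^ (α - 1) * Real.exp (-|x - γ| / β)) :=
        MeasureTheory.integral_const_mul _ _
    _ = D * ∫ t : ℝ, t ^ k * (|t| ^ (α - 1) * Real.exp (-|t| / β)) := by
        rw [integral_sub_right_eq_self (fun t : ℝ => t ^ k * (|t| ^ (α - 1) * Real.exp (-|t| / β))) γ]
    _ = D * (2 * ∫ u in Set.Ioi (0:ℝ), u ^ k * (u ^ (α - 1) * Real.exp (-u / β))) := by
        rw [habs]
        have h2 := _root_.integral_comp_abs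
          (f := fun u : ℝ => u ^ k * (u ^ (α - 1) * Real.exp (-u / β)))
        beta_reduce at h2 ⊢
        rw [h2]
    _ = D * (2 * ∫ u in Set.Ioi (0:ℝ), u ^ (α + (k : ℝ) - 1) * Real.exp (-(1 / β * u))) := by
        congr 1; congr 1
        refine setIntegral_congr_fun measurableSet_Ioi (fun u hu => ?_)
        have h1 : u ^ (α + (k : ℝ) - 1) = u ^ k * u ^ (α - 1) := by
          rw [← Real.rpow_natCast u k, ← Real.rpow_add hu]; congr 1; ring
        rw [h1, show -(1 / β * u) = -u / β by ring]; ring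
    _ = D * (2 * ((1 / (1 / β)) ^ (α + (k : ℝ)) * Real.Gamma (α + (k : ℝ)))) := by
        rw [integral_rpow_mul_exp_neg_mul_Ioi (by positivity) (by positivity)]
    _ = (δ ^ ζ * Real.Gamma (α + k) / (Real.Gamma α * Real.Gamma ζ)) *
          (β ^ (ζ + (k : ℝ) - 1) * Real.exp (-δ * β)) := by
        rw [one_div_one_div, hD]
        have e1 : β ^ (α + (k : ℝ)) = β ^ α * (β ^ (ζ + (k : ℝ) - 1) / β ^ (ζ - 1)) := by
          rw [← Real.rpow_sub hβ, ← Real.rpow_add hβ]; congr 1; ring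
        rw [e1]
        have hβα : (0:ℝ) < β ^ α := Real.rpow_pos_of_pos hβ α
        have hβζ : (0:ℝ) < β ^ (ζ - 1) := Real.rpow_pos_of_pos hβ _
        have hΓα : (0:ℝ) < Real.Gamma α := Real.Gamma_pos_of_pos hα
        have hΓζ : (0:ℝ) < Real.Gamma ζ := Real.Gamma_pos_of_pos hζ
        field_simp


open Set in
lemma skd_moment (α ζ δ γ : ℝ) (hα : 0 < α) (hζ : 0 < ζ) (hδ : 0 < δ) (k : ℕ) (hk : Even k) :
    ∫ x : ℝ, (x - γ) ^ k * skdDensity α ζ δ γ x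
      = Real.Gamma (α + k) * Real.Gamma (ζ + k) /
          (Real.Gamma α * Real.Gamma ζ * δ ^ k) := by
  set H : ℝ → ℝ → ℝ := fun β x => (x - γ) ^ k *
      ((|x - γ| ^ (α - 1) / (2 * β ^ α * Real.Gamma α)) * Real.exp (-|x - γ| / β) *
        ((δ ^ ζ * β ^ (ζ - 1) / Real.Gamma ζ) * Real.exp (-δ * β))) with hH
  set c : ℝ := δ ^ ζ * Real.Gamma (α + k) / (Real.Gamma α * Real.Gamma ζ) with hc
  have hmeas : Measurable (fun p : ℝ × ℝ => H p.1 p.2) := by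
    rw [hH]; fun_prop
  have hnn : ∀ β ∈ Set.Ioi (0:ℝ), ∀ x : ℝ, 0 ≤ H β x := by
    intro β hβ x
    refine mul_nonneg (hk.pow_nonneg _) (mul_nonneg (mul_nonneg
      (div_nonneg (Real.rpow_nonneg (abs_nonneg _) _)
        (mul_nonneg (mul_nonneg (by norm_num) (Real.rpow_nonneg (le_of_lt hβ) _))
          (Real.Gamma_nonneg_of_nonneg hα.le)))
      (Real.exp_nonneg _))
      (mul_nonneg (div_nonneg (mul_nonneg (Real.rpow_nonneg hδ.le _)
        (Real.rpow_nonneg (le_of_lt hβ) _)) (Real.Gamma_nonneg_of_nonneg hζ.le))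
        (Real.exp_nonneg _)))
  have hβint : IntegrableOn
      (fun β : ℝ => c * (β ^ (ζ + (k:ℝ) - 1) * Real.exp (-δ * β))) (Set.Ioi 0) := by
    have h := integrableOn_rpow_mul_exp_neg_mul_rpow (s := ζ + (k : ℝ) - 1) (p := 1)
      (b := δ) (by have : (0:ℝ) ≤ (k:ℝ) := Nat.cast_nonneg k; linarith) zero_lt_one hδ
    refine ((h.congr_fun (fun u hu => ?_) measurableSet_Ioi).const_mul c)
    rw [Real.rpow_one]
  have hintH : Integrable (Function.uncurry H)
      ((volume.restrict (Set.Ioi 0)).prod volume) := by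
    have huc : Function.uncurry H = fun p : ℝ × ℝ => H p.1 p.2 := rfl
    rw [huc, integrable_prod_iff (hmeas.aestronglyMeasurable)]
    constructor
    · filter_upwards [ae_restrict_mem measurableSet_Ioi] with β hβ
      exact (skd_inner α ζ δ γ hα hζ hδ k hk hβ).1
    · refine hβint.congr ?_
      filter_upwards [ae_restrict_mem measurableSet_Ioi] with β hβ
      have h1 : (fun x => ‖H β x‖) = fun x => H β x :=
        funext fun x => Real.norm_of_nonneg (hnn β hβ x)
      show c * _ = ∫ x : ℝ, ‖H β x‖
      rw [h1]
      exact ((skd_inner α ζ δ γ hα hζ hδ k hk hβ).2).symm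
  have hx : ∀ x : ℝ, (x - γ) ^ k * skdDensity α ζ δ γ x
      = ∫ β in Set.Ioi (0:ℝ), H β x := by
    intro x
    rw [skdDensity]
    exact (MeasureTheory.integral_const_mul _ _).symm
  calc ∫ x : ℝ, (x - γ) ^ k * skdDensity α ζ δ γ x
      = ∫ x : ℝ, ∫ β in Set.Ioi (0:ℝ), H β x := by
        exact congrArg _ (funext hx)
    _ = ∫ β in Set.Ioi (0:ℝ), ∫ x : ℝ, H β x := (integral_integral_swap hintH).symm
    _ = ∫ β in Set.Ioi (0:ℝ), c * (β ^ (ζ + (k:ℝ) - 1) * Real.exp (-δ * β)) :=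
        setIntegral_congr_fun measurableSet_Ioi
          (fun β hβ => (skd_inner α ζ δ γ hα hζ hδ k hk hβ).2)
    _ = c * ∫ β in Set.Ioi (0:ℝ), β ^ (ζ + (k:ℝ) - 1) * Real.exp (-δ * β) :=
        MeasureTheory.integral_const_mul _ _
    _ = c * ((1 / δ) ^ (ζ + (k:ℝ)) * Real.Gamma (ζ + (k:ℝ))) := by
        congr 1
        rw [← integral_rpow_mul_exp_neg_mul_Ioi (by positivity) hδ]
        exact setIntegral_congr_fun measurableSet_Ioi (fun β hβ => by rw [neg_mul])
    _ = Real.Gamma (α + k) * Real.Gamma (ζ + k) /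
          (Real.Gamma α * Real.Gamma ζ * δ ^ k) := by
        rw [hc]
        have h1 : ((1:ℝ) / δ) ^ (ζ + (k:ℝ)) = (δ ^ ζ * δ ^ k)⁻¹ := by
          rw [one_div, ← Real.rpow_natCast δ k, ← Real.rpow_add hδ,
            Real.inv_rpow hδ.le]
        rw [h1]
        have hΓα : (0:ℝ) < Real.Gamma α := Real.Gamma_pos_of_pos hα
        have hΓζ : (0:ℝ) < Real.Gamma ζ := Real.Gamma_pos_of_pos hζ
        have hδζ : (0:ℝ) < δ ^ ζ := Real.rpow_pos_of_pos hδ ζ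
        have hδk : (0:ℝ) < (δ:ℝ) ^ k := pow_pos hδ k
        field_simp


/-- The fourth cumulant κ₄ = μ̃₄ - 3 μ̃₂² of the symmetric K-distribution. -/
theorem skd_fourth_cumulant (α ζ δ γ : ℝ) (hα : 0 < α) (hζ : 0 < ζ) (hδ : 0 < δ) :
    (∫ x : ℝ, (x - γ) ^ 4 * skdDensity α ζ δ γ x)
        - 3 * (∫ x : ℝ, (x - γ) ^ 2 * skdDensity α ζ δ γ x) ^ 2
      = (α * (α + 1) * (α + 2) * (α + 3) * ζ * (ζ + 1) * (ζ + 2) * (ζ + 3)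
          - 3 * (α * (α + 1) * ζ * (ζ + 1)) ^ 2) / δ ^ 4 := by
  have m2 := skd_moment α ζ δ γ hα hζ hδ 2 (by decide)
  have m4 := skd_moment α ζ δ γ hα hζ hδ 4 (by decide)
  norm_num at m2 m4
  rw [m2, m4]
  have g2 : ∀ s : ℝ, 0 < s → Real.Gamma (s + 2) = (s + 1) * s * Real.Gamma s := by
    intro s hs
    rw [show s + 2 = (s + 1) + 1 by ring, Real.Gamma_add_one (by positivity),
      Real.Gamma_add_one hs.ne']
    ring
  have g4 : ∀ s : ℝ, 0 < s →
      Real.Gamma (s + 4) = (s + 3) * (s + 2) * (s + 1) * s * Real.Gamma s := by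
    intro s hs
    rw [show s + 4 = (s + 3) + 1 by ring, Real.Gamma_add_one (by positivity),
      show s + 3 = (s + 2) + 1 by ring, Real.Gamma_add_one (by positivity), g2 s hs]
    ring
  rw [g2 α hα, g2 ζ hζ, g4 α hα, g4 ζ hζ]
  have hΓα : (0:ℝ) < Real.Gamma α := Real.Gamma_pos_of_pos hα
  have hΓζ : (0:ℝ) < Real.Gamma ζ := Real.Gamma_pos_of_pos hζ
  field_simp
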